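/- For every integer k ≥ 3 there exists a real ε_k > 0 such that B(k,v) < k² − ε_k for every integer v satisfying 0 < v < k. -/

import Mathlib

open Real

/-- `F(a,b) = (a!)^(b/a)`. -/
noncomputable def Ffun (a b : ℕ) : ℝ := (a.factorial : ℝ) ^ ((b : ℝ) / (a : ℝ))

/-- `D(k) = F(k,1) / F(k-1,1)`. -/
noncomputable def Dfun (k : ℕ) : ℝ := Ffun k 1 / Ffun (k - 1) 1

/-- `C(k) = D(k) / D(k-1)`. -/
noncomputable def Cfun (k : ℕ) : ℝ := Dfun k / Dfun (k - 1)

/-- `B(k,v) = C(k)^v · ((k-v)² + 2v(k-v)·D(k-1) + v(v-1)·D(k-1)²)`. -/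
noncomputable def Bfun (k v : ℕ) : ℝ :=
  Cfun k ^ v *
    (((k : ℝ) - (v : ℝ)) ^ 2 + 2 * (v : ℝ) * ((k : ℝ) - (v : ℝ)) * Dfun (k - 1) +
      (v : ℝ) * ((v : ℝ) - 1) * Dfun (k - 1) ^ 2)

lemma Ffun_pos (a : ℕ) : 0 < Ffun a 1 :=
  Real.rpow_pos_of_pos (by exact_mod_cast a.factorial_pos) _

lemma Ffun_pow (a : ℕ) (ha : 1 ≤ a) : Ffun a 1 ^ a = (a.factorial : ℝ) := by
  have h0 : (a : ℝ) ≠ 0 := by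
    have : 0 < a := ha
    positivity
  rw [Ffun, ← Real.rpow_natCast ((a.factorial : ℝ) ^ _) a, ← Real.rpow_mul (by positivity),
    Nat.cast_one, one_div, inv_mul_cancel₀ h0, Real.rpow_one]

lemma Dfun_pos (k : ℕ) : 0 < Dfun k := div_pos (Ffun_pos _) (Ffun_pos _)

/-- `Dfun j ^ (j(j-1)) = (j!)^(j-1) / ((j-1)!)^j` for `j ≥ 2`. -/
lemma Dfun_pow (j : ℕ) (hj : 2 ≤ j) :
    Dfun j ^ (j * (j - 1)) = (j.factorial : ℝ) ^ (j - 1) / ((j - 1).factorial : ℝ) ^ j := by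
  have h1 : 1 ≤ j := le_trans (by norm_num) hj
  have h2 : 1 ≤ j - 1 := by omega
  rw [Dfun, div_pow]
  congr 1
  · rw [pow_mul, Ffun_pow j h1]
  · rw [show j * (j - 1) = (j - 1) * j by ring, pow_mul, Ffun_pow (j - 1) h2]

/-- key identity:  `C(k)^k * D(k-1)^2 = k/(k-1)`. -/
lemma key_identity (k : ℕ) (hk : 3 ≤ k) :
    Cfun k ^ k * Dfun (k - 1) ^ 2 = (k : ℝ) / ((k : ℝ) - 1) := by
  have e21 : k - 1 - 1 = k - 2 := by omega
  set M := Ffun k 1 with hM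
  set m := Ffun (k - 1) 1 with hm
  set p := Ffun (k - 2) 1 with hp
  have hMpos := Ffun_pos k
  have hmpos := Ffun_pos (k - 1)
  have hppos := Ffun_pos (k - 2)
  have hMk : M ^ k = (k.factorial : ℝ) := Ffun_pow k (by omega)
  have hmk : m ^ (k - 1) = ((k - 1).factorial : ℝ) := Ffun_pow (k - 1) (by omega)
  have hpk : p ^ (k - 2) = ((k - 2).factorial : ℝ) := Ffun_pow (k - 2) (by omega)
  have hC : Cfun k = M * p / m ^ 2 := by
    rw [Cfun, Dfun, Dfun, e21, ← hM, ← hm, ← hp]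
    field_simp
  have hD : Dfun (k - 1) = m / p := by rw [Dfun, e21]
  rw [hC, hD]
  have expand : (M * p / m ^ 2) ^ k * (m / p) ^ 2
      = (M ^ k * p ^ (k - 2)) / (m ^ (k - 1)) ^ 2 := by
    have hpk2 : p ^ k = p ^ (k - 2) * p ^ 2 := by rw [← pow_add]; congr 1; omega
    have hm2k : (m ^ 2) ^ k = (m ^ (k-1))^2 * m ^ 2 := by
      rw [← pow_mul, ← pow_mul, ← pow_add]; congr 1; omega
    simp only [div_pow, mul_pow]
    rw [hpk2, hm2k]
    have hm0 : m ≠ 0 := hmpos.ne'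
    have hp0 : p ≠ 0 := hppos.ne'
    field_simp
  rw [expand, hMk, hmk, hpk]
  -- now pure factorial arithmetic
  have f1 : (k.factorial : ℝ) = k * (k - 1).factorial := by
    rw [show k = (k-1) + 1 by omega, Nat.factorial_succ]
    push_cast [show k - 1 + 1 = k by omega]
    ring
  have f2 : ((k - 1).factorial : ℝ) = ((k : ℝ) - 1) * (k - 2).factorial := by
    rw [show k - 1 = (k-2) + 1 by omega, Nat.factorial_succ]
    have : ((k : ℕ) - 2 + 1 : ℕ) = k - 1 := by omega
    push_cast [this]
    have : ((k:ℝ) - 1) = ((k - 1 : ℕ) : ℝ) := by push_cast [show (1:ℕ) ≤ k by omega]; ring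
    rw [this]
  have hf2pos : (0:ℝ) < (k - 2).factorial := by exact_mod_cast Nat.factorial_pos _
  have hk1 : (0:ℝ) < (k:ℝ) - 1 := by
    have : (3:ℝ) ≤ k := by exact_mod_cast hk
    linarith
  rw [f1, f2]
  field_simp


noncomputable def Qr (k d t : ℝ) : ℝ := (k - t + t * d) ^ 2 - t * d ^ 2

lemma E0_pos (k d : ℝ) (hd1 : 1 < d) (hd2 : d ≤ 1.42)
    (hx1 : 0.88 ≤ k * (d - 1)) (hx2 : k * (d - 1) ≤ 1.41) :
    0 < 4 * (d-1) * k * d^2 - 2 * (d-1)^2 * k^2 - d^4 + (d-1)^4 := by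
  set x := k * (d - 1) with hx
  have h : 4 * (d-1) * k * d^2 - 2 * (d-1)^2 * k^2 - d^4 + (d-1)^4
      = 4 * x * d^2 - 2 * x^2 - d^4 + (d-1)^4 := by rw [hx]; ring
  rw [h]
  nlinarith [sq_nonneg (d - 1), sq_nonneg (x - 0.88), sq_nonneg (1.41 - x), sq_nonneg (d^2 - 1.42*d), sq_nonneg (d*x - x), mul_pos (sub_pos.mpr hd1) (lt_of_lt_of_le (by norm_num) hx1)]

lemma Ek_pos (k d : ℝ) (hd1 : 1 < d) (hd2 : d ≤ 1.42)
    (hx1 : 0.88 ≤ k * (d - 1)) (hx2 : k * (d - 1) ≤ 1.41) :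
    0 < 4*(d-1)*(k + k*(d-1))*d^2 - 2*(d-1)^2*(k + k*(d-1))^2 - 2*(d-1)^2*k*d^2 - d^4 + (d-1)^4 := by
  set x := k * (d - 1) with hx
  have h : 4*(d-1)*(k + k*(d-1))*d^2 - 2*(d-1)^2*(k + k*(d-1))^2 - 2*(d-1)^2*k*d^2 - d^4 + (d-1)^4
      = d^2 * (2*x*(d + 1 - x) - d^2) + (d-1)^4 := by rw [hx]; ring
  rw [h]
  have key : 0 < 2*x*(d + 1 - x) - d^2 := by nlinarith [sq_nonneg (d - x), sq_nonneg (d-1)]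
  nlinarith [sq_nonneg (d-1), sq_nonneg d]

/-- strict log-convexity of `Q` at points of `[0,k]`. -/
lemma Q_logconvex (k d v : ℝ) (hd1 : 1 < d) (hd2 : d ≤ 1.42)
    (hx1 : 0.88 ≤ k * (d - 1)) (hx2 : k * (d - 1) ≤ 1.41)
    (hv0 : 0 ≤ v) (hvk : v ≤ k) :
    (Qr k d v)^2 < Qr k d (v-1) * Qr k d (v+1) := by
  have hk : (0:ℝ) < k := by nlinarith
  have hE0 := E0_pos k d hd1 hd2 hx1 hx2
  have hEk := Ek_pos k d hd1 hd2 hx1 hx2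
  have interp : k * (Qr k d (v-1) * Qr k d (v+1) - (Qr k d v)^2)
      = (k - v) * (4 * (d-1) * k * d^2 - 2 * (d-1)^2 * k^2 - d^4 + (d-1)^4)
      + v * (4*(d-1)*(k + k*(d-1))*d^2 - 2*(d-1)^2*(k + k*(d-1))^2 - 2*(d-1)^2*k*d^2 - d^4 + (d-1)^4)
      + 2 * (d-1)^4 * v * (k - v) * k := by
    simp only [Qr]; ring
  have hpos : 0 < k * (Qr k d (v-1) * Qr k d (v+1) - (Qr k d v)^2) := by
    rw [interp]
    have h1 : 0 ≤ (k - v) * (4 * (d-1) * k * d^2 - 2 * (d-1)^2 * k^2 - d^4 + (d-1)^4) :=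
      mul_nonneg (by linarith) hE0.le
    have h2 : 0 ≤ 2 * (d-1)^4 * v * (k - v) * k := by
      have : (0:ℝ) ≤ (d-1)^4 := by positivity
      have hvk' : 0 ≤ k - v := by linarith
      positivity
    rcases eq_or_lt_of_le hv0 with h | h
    · have h3 : 0 < (k - v) * (4 * (d-1) * k * d^2 - 2 * (d-1)^2 * k^2 - d^4 + (d-1)^4) := by
        apply mul_pos _ hE0
        rw [← h]; linarith
      nlinarith [mul_nonneg hv0 hEk.le]
    · have h3 : 0 < v * (4*(d-1)*(k + k*(d-1))*d^2 - 2*(d-1)^2*(k + k*(d-1))^2 - 2*(d-1)^2*k*d^2 - d^4 + (d-1)^4) :=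
        mul_pos h hEk
      linarith
  nlinarith [hpos]


/-- For a strictly convex sequence, interior points lie strictly below the chord. -/
lemma chord_lemma (k : ℕ) (q : ℕ → ℝ)
    (hconv : ∀ i, i + 2 ≤ k → q i + q (i + 2) > 2 * q (i + 1)) :
    ∀ v : ℕ, 0 < v → v < k → (k : ℝ) * q v < ((k : ℝ) - v) * q 0 + v * q k := by
  set δ : ℕ → ℝ := fun i => q (i + 1) - q i with hδ
  have hmono : ∀ j, j + 1 ≤ k → ∀ i, i < j → δ i < δ j := by
    intro j
    induction j with
    | zero => intro _ i hi; omega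
    | succ j ih =>
      intro hj i hi
      have hj1 : j + 1 ≤ k := by omega
      have hstep : δ j < δ (j + 1) := by
        have := hconv j (by omega)
        simp only [hδ]; linarith
      rcases Nat.lt_or_ge i j with h | h
      · exact lt_trans (ih hj1 i h) hstep
      · have : i = j := by omega
        rw [this]; exact hstep
  intro v hv hvk
  have hsum1 : q v - q 0 = ∑ i ∈ Finset.range v, δ i := (Finset.sum_range_sub q v).symm
  have hsum2 : q k - q v = ∑ i ∈ Finset.Ico v k, δ i := by
    rw [Finset.sum_Ico_eq_sub _ (le_of_lt hvk), Finset.sum_range_sub q, Finset.sum_range_sub q]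
    ring
  -- each δ i ≤ δ (v-1) for i < v ; each δ j ≥ δ v for j ∈ [v, k)
  have hub : ∑ i ∈ Finset.range v, δ i ≤ v * δ (v - 1) := by
    have : ∀ i ∈ Finset.range v, δ i ≤ δ (v - 1) := by
      intro i hi
      rcases Nat.lt_or_ge i (v - 1) with h | h
      · exact (hmono (v - 1) (by omega) i h).le
      · have : i = v - 1 := by simp at hi; omega
        rw [this]
    calc ∑ i ∈ Finset.range v, δ i ≤ ∑ _i ∈ Finset.range v, δ (v-1) := Finset.sum_le_sum this
    _ = v * δ (v - 1) := by rw [Finset.sum_const, Finset.card_range]; simp [nsmul_eq_mul]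
  have hlb : (k - v : ℕ) * δ v ≤ ∑ i ∈ Finset.Ico v k, δ i := by
    have : ∀ i ∈ Finset.Ico v k, δ v ≤ δ i := by
      intro i hi
      simp only [Finset.mem_Ico] at hi
      rcases Nat.lt_or_ge v i with h | h
      · exact (hmono i (by omega) v h).le
      · have : i = v := by omega
        rw [this]
    calc ((k - v : ℕ) : ℝ) * δ v = ∑ _i ∈ Finset.Ico v k, δ v := by
          rw [Finset.sum_const, Nat.card_Ico]; simp [nsmul_eq_mul]
    _ ≤ ∑ i ∈ Finset.Ico v k, δ i := Finset.sum_le_sum this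
  have hstrict : δ (v - 1) < δ v := by
    have := hmono v (by omega) (v - 1) (by omega)
    exact this
  -- combine
  have hkv : ((k - v : ℕ) : ℝ) = (k : ℝ) - v := by
    push_cast [Nat.cast_sub (le_of_lt hvk)]; ring
  have hvpos : (0:ℝ) < v := by exact_mod_cast hv
  have hkvpos : (0:ℝ) < (k:ℝ) - v := by
    have : (v:ℝ) < k := by exact_mod_cast hvk
    linarith
  have main : ((k:ℝ) - v) * (q v - q 0) < v * (q k - q v) := by
    rw [hsum1, hsum2]
    calc ((k:ℝ) - v) * ∑ i ∈ Finset.range v, δ i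
        ≤ ((k:ℝ) - v) * (v * δ (v-1)) := by
          exact mul_le_mul_of_nonneg_left hub hkvpos.le
      _ < ((k:ℝ) - v) * (v * δ v) := by
          apply mul_lt_mul_of_pos_left _ hkvpos
          exact mul_lt_mul_of_pos_left hstrict hvpos
      _ = (v:ℝ) * (((k - v : ℕ):ℝ) * δ v) := by rw [hkv]; ring
      _ ≤ (v:ℝ) * ∑ i ∈ Finset.Ico v k, δ i := mul_le_mul_of_nonneg_left hlb hvpos.le
  nlinarith [main]


lemma Dfun_le_of (j : ℕ) (hj : 2 ≤ j) (c : ℝ) (hc : 0 ≤ c)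
    (h : (j.factorial : ℝ) ^ (j - 1) ≤ c ^ (j * (j - 1)) * ((j - 1).factorial : ℝ) ^ j) :
    Dfun j ≤ c := by
  have hN : j * (j - 1) ≠ 0 := by
    have : 1 ≤ j - 1 := by omega
    positivity
  apply le_of_pow_le_pow_left₀ hN hc
  rw [Dfun_pow j hj, div_le_iff₀ (by positivity)]
  linarith [h]

lemma Dfun_ge_of (j : ℕ) (hj : 2 ≤ j) (c : ℝ)
    (h : c ^ (j * (j - 1)) * ((j - 1).factorial : ℝ) ^ j ≤ (j.factorial : ℝ) ^ (j - 1)) :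
    c ≤ Dfun j := by
  have hN : j * (j - 1) ≠ 0 := by
    have : 1 ≤ j - 1 := by omega
    positivity
  apply le_of_pow_le_pow_left₀ hN (Dfun_pos j).le
  rw [Dfun_pow j hj, le_div_iff₀ (by positivity)]
  linarith [h]

/-- rectangle bounds for small k -/
lemma rect_small (k : ℕ) (hk3 : 3 ≤ k) (hk9 : k ≤ 9) :
    Dfun (k-1) ≤ 1.42 ∧ 0.88 ≤ (k:ℝ) * (Dfun (k-1) - 1) ∧ (k:ℝ) * (Dfun (k-1) - 1) ≤ 1.41 := by
  interval_cases k
  · have hle : Dfun 2 ≤ 1.42 :=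
      Dfun_le_of 2 (by norm_num) 1.42 (by norm_num) (by norm_num [Nat.factorial])
    have hge : (1 + 0.88/3 : ℝ) ≤ Dfun 2 :=
      Dfun_ge_of 2 (by norm_num) _ (by norm_num [Nat.factorial])
    have hle2 : Dfun 2 ≤ (1 + 1.41/3 : ℝ) :=
      Dfun_le_of 2 (by norm_num) _ (by norm_num) (by norm_num [Nat.factorial])
    norm_num
    refine ⟨by norm_num at hle ⊢; linarith, by linarith, by linarith⟩
  · have hle : Dfun 3 ≤ 1.42 :=
      Dfun_le_of 3 (by norm_num) 1.42 (by norm_num) (by norm_num [Nat.factorial])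
    have hge : (1 + 0.88/4 : ℝ) ≤ Dfun 3 :=
      Dfun_ge_of 3 (by norm_num) _ (by norm_num [Nat.factorial])
    have hle2 : Dfun 3 ≤ (1 + 1.41/4 : ℝ) :=
      Dfun_le_of 3 (by norm_num) _ (by norm_num) (by norm_num [Nat.factorial])
    norm_num
    refine ⟨by norm_num at hle ⊢; linarith, by linarith, by linarith⟩
  · have hle : Dfun 4 ≤ 1.42 :=
      Dfun_le_of 4 (by norm_num) 1.42 (by norm_num) (by norm_num [Nat.factorial])
    have hge : (1 + 0.88/5 : ℝ) ≤ Dfun 4 :=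
      Dfun_ge_of 4 (by norm_num) _ (by norm_num [Nat.factorial])
    have hle2 : Dfun 4 ≤ (1 + 1.41/5 : ℝ) :=
      Dfun_le_of 4 (by norm_num) _ (by norm_num) (by norm_num [Nat.factorial])
    norm_num
    refine ⟨by norm_num at hle ⊢; linarith, by linarith, by linarith⟩
  · have hle : Dfun 5 ≤ 1.42 :=
      Dfun_le_of 5 (by norm_num) 1.42 (by norm_num) (by norm_num [Nat.factorial])
    have hge : (1 + 0.88/6 : ℝ) ≤ Dfun 5 :=
      Dfun_ge_of 5 (by norm_num) _ (by norm_num [Nat.factorial])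
    have hle2 : Dfun 5 ≤ (1 + 1.41/6 : ℝ) :=
      Dfun_le_of 5 (by norm_num) _ (by norm_num) (by norm_num [Nat.factorial])
    norm_num
    refine ⟨by norm_num at hle ⊢; linarith, by linarith, by linarith⟩
  · have hle : Dfun 6 ≤ 1.42 :=
      Dfun_le_of 6 (by norm_num) 1.42 (by norm_num) (by norm_num [Nat.factorial])
    have hge : (1 + 0.88/7 : ℝ) ≤ Dfun 6 :=
      Dfun_ge_of 6 (by norm_num) _ (by norm_num [Nat.factorial])
    have hle2 : Dfun 6 ≤ (1 + 1.41/7 : ℝ) :=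
      Dfun_le_of 6 (by norm_num) _ (by norm_num) (by norm_num [Nat.factorial])
    norm_num
    refine ⟨by norm_num at hle ⊢; linarith, by linarith, by linarith⟩
  · have hle : Dfun 7 ≤ 1.42 :=
      Dfun_le_of 7 (by norm_num) 1.42 (by norm_num) (by norm_num [Nat.factorial])
    have hge : (1 + 0.88/8 : ℝ) ≤ Dfun 7 :=
      Dfun_ge_of 7 (by norm_num) _ (by norm_num [Nat.factorial])
    have hle2 : Dfun 7 ≤ (1 + 1.41/8 : ℝ) :=
      Dfun_le_of 7 (by norm_num) _ (by norm_num) (by norm_num [Nat.factorial])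
    norm_num
    refine ⟨by norm_num at hle ⊢; linarith, by linarith, by linarith⟩
  · have hle : Dfun 8 ≤ 1.42 :=
      Dfun_le_of 8 (by norm_num) 1.42 (by norm_num) (by norm_num [Nat.factorial])
    have hge : (1 + 0.88/9 : ℝ) ≤ Dfun 8 :=
      Dfun_ge_of 8 (by norm_num) _ (by norm_num [Nat.factorial])
    have hle2 : Dfun 8 ≤ (1 + 1.41/9 : ℝ) :=
      Dfun_le_of 8 (by norm_num) _ (by norm_num) (by norm_num [Nat.factorial])
    norm_num
    refine ⟨by norm_num at hle ⊢; linarith, by linarith, by linarith⟩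


set_option maxHeartbeats 1600000 in
/-- rectangle bounds for k ≥ 10 -/
lemma rect_large (k : ℕ) (hk : 10 ≤ k) :
    Dfun (k-1) ≤ 1.42 ∧ 0.88 ≤ (k:ℝ) * (Dfun (k-1) - 1) ∧ (k:ℝ) * (Dfun (k-1) - 1) ≤ 1.41 := by
  set n : ℕ := k - 2 with hn
  have hn8 : 8 ≤ n := by omega
  have hnR : (8:ℝ) ≤ (n:ℝ) := by exact_mod_cast hn8
  have hn0 : (0:ℝ) < (n:ℝ) := by linarith
  have hkn : (k:ℝ) = (n:ℝ) + 2 := by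
    have : k = n + 2 := by omega
    rw [this]; push_cast; ring
  have hNne : (n+1) * n ≠ 0 := by positivity
  set d := Dfun (k-1) with hd
  have hdpos : 0 < d := Dfun_pos _
  have hfp : (0:ℝ) < (n.factorial : ℝ) := by exact_mod_cast n.factorial_pos
  -- T = d^N = (n+1)^n / n!
  have hdT : d ^ ((n+1)*n) = ((n:ℝ)+1)^n / (n.factorial : ℝ) := by
    have e : k - 1 = n + 1 := by omega
    have h0 := Dfun_pow (n+1) (by omega)
    have e2 : (n + 1) - 1 = n := by omega
    rw [e2] at h0
    rw [hd, e, h0, Nat.factorial_succ]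
    push_cast
    rw [div_eq_div_iff (by positivity) (by positivity)]
    rw [mul_pow]
    ring
  -- upper: T ≤ exp (n+1)
  have hU : ((n:ℝ)+1)^n / (n.factorial:ℝ) ≤ Real.exp ((n:ℝ)+1) := by
    have hsum := Real.sum_le_exp_of_nonneg (show (0:ℝ) ≤ (n:ℝ)+1 by positivity) (n+1)
    have hsingle : ((n:ℝ)+1)^n / (n.factorial:ℝ)
        ≤ ∑ i ∈ Finset.range (n+1), ((n:ℝ)+1)^i / (i.factorial:ℝ) :=
      Finset.single_le_sum (f := fun i => ((n:ℝ)+1)^i / (i.factorial:ℝ))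
        (fun i _ => by positivity) (Finset.self_mem_range_succ n)
    linarith
  have hexpN : (Real.exp (1/(n:ℝ)))^((n+1)*n) = Real.exp ((n:ℝ)+1) := by
    rw [← Real.exp_nat_mul]
    congr 1
    push_cast
    field_simp
  have hd_le : d ≤ Real.exp (1/(n:ℝ)) := by
    apply le_of_pow_le_pow_left₀ hNne (Real.exp_pos _).le
    rw [hdT, hexpN]; exact hU
  -- exp(1/n) ≤ 1 + 1/n + (3/4)/n²
  have hq : Real.exp (1/(n:ℝ)) ≤ 1 + 1/(n:ℝ) + 3/4 * (1/(n:ℝ))^2 := by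
    have hx1 : |1/(n:ℝ)| ≤ 1 := by
      rw [abs_of_pos (by positivity), div_le_one hn0]; linarith
    have hb := Real.exp_bound hx1 (by norm_num : 0 < 2)
    have hs : ∑ i ∈ Finset.range 2, (1/(n:ℝ))^i / (i.factorial:ℝ) = 1 + 1/(n:ℝ) := by
      simp [Finset.sum_range_succ, Nat.factorial]
    rw [hs] at hb
    have habs : |1/(n:ℝ)| ^ 2 * (((2:ℕ).succ:ℝ) / ((2:ℕ).factorial * (2:ℕ))) = 3/4 * (1/(n:ℝ))^2 := by
      rw [abs_of_pos (by positivity)]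
      norm_num [Nat.factorial]
      ring
    rw [habs] at hb
    linarith [(abs_le.mp hb).2]
  have h18 : 1/(n:ℝ) ≤ 1/8 := by
    rw [div_le_div_iff₀ hn0 (by norm_num)]; linarith
  have h18sq : (1/(n:ℝ))^2 ≤ (1/8:ℝ)^2 := pow_le_pow_left₀ (by positivity) h18 2
  have hd1n : d - 1 ≤ 1/(n:ℝ) + 3/4 * (1/(n:ℝ))^2 := by linarith
  refine ⟨by nlinarith, ?_, ?_⟩
  · -- lower bound 0.88 ≤ k (d-1)
    -- Stirling upper bound on n!
    have hstir : (n.factorial : ℝ) ≤ Real.exp 1 * Real.sqrt n * ((n:ℝ)^n / Real.exp 1 ^ n) := by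
      have ha := Stirling.stirlingSeq'_antitone (Nat.zero_le (n-1))
      simp only [Function.comp, Nat.succ_eq_add_one] at ha
      have e1 : n - 1 + 1 = n := by omega
      rw [e1, Stirling.stirlingSeq_one, Stirling.stirlingSeq] at ha
      have hs2 : (0:ℝ) < Real.sqrt 2 := by positivity
      have hden : (0:ℝ) < Real.sqrt (2*(n:ℝ)) * (((n:ℝ))/Real.exp 1)^n := by
        apply mul_pos (Real.sqrt_pos.mpr (by positivity))
        positivity
      rw [div_le_div_iff₀ hden hs2] at ha
      have hsq : Real.sqrt (2*(n:ℝ)) = Real.sqrt 2 * Real.sqrt n := Real.sqrt_mul (by norm_num) _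
      have hsn : (0:ℝ) < Real.sqrt (n:ℝ) := Real.sqrt_pos.mpr hn0
      rw [hsq] at ha
      have hdiv : ((n:ℝ)/Real.exp 1)^n = (n:ℝ)^n / Real.exp 1 ^ n := div_pow _ _ _
      rw [hdiv] at ha
      nlinarith [ha, hs2, Real.sq_sqrt (show (0:ℝ) ≤ 2 by norm_num),
        mul_pos hsn (div_pos (pow_pos hn0 n) (pow_pos (Real.exp_pos 1) n)), Real.exp_pos 1]
    -- T ≥ 2 exp(n-1)/√n
    have hsn : (0:ℝ) < Real.sqrt (n:ℝ) := Real.sqrt_pos.mpr hn0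
    have hbern : 2 * (n:ℝ)^n ≤ ((n:ℝ)+1)^n := by
      have hp0 : (0:ℝ) ≤ 1/(n:ℝ) := by positivity
      have hm2 : (-2:ℝ) ≤ 1/(n:ℝ) := by linarith
      have hb := one_add_mul_le_pow hm2 n
      have hcan : (n:ℝ) * (1/(n:ℝ)) = 1 := by field_simp
      rw [hcan] at hb
      have hmul : (1 + 1/(n:ℝ))^n * (n:ℝ)^n = ((n:ℝ)+1)^n := by
        rw [← mul_pow]
        congr 1
        field_simp
      calc 2 * (n:ℝ)^n = (1+1) * (n:ℝ)^n := by norm_num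
        _ ≤ (1 + 1/(n:ℝ))^n * (n:ℝ)^n :=
            mul_le_mul_of_nonneg_right (by linarith) (pow_pos hn0 n).le
        _ = ((n:ℝ)+1)^n := hmul
    have hTge : 2 * Real.exp ((n:ℝ)-1) / Real.sqrt n ≤ ((n:ℝ)+1)^n / (n.factorial:ℝ) := by
      rw [div_le_div_iff₀ hsn hfp]
      have hexpn : Real.exp ((n:ℝ)-1) * Real.exp 1 = Real.exp (n:ℝ) := by
        rw [← Real.exp_add]; ring_nf
      have hexpnn : Real.exp 1 ^ n = Real.exp (n:ℝ) := by
        rw [← Real.exp_nat_mul]; ring_nf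
      calc 2 * Real.exp ((n:ℝ)-1) * (n.factorial:ℝ)
          ≤ 2 * Real.exp ((n:ℝ)-1) * (Real.exp 1 * Real.sqrt n * ((n:ℝ)^n / Real.exp 1 ^ n)) := by
            apply mul_le_mul_of_nonneg_left hstir
            positivity
        _ = 2 * (Real.exp ((n:ℝ)-1) * Real.exp 1) * Real.sqrt n * ((n:ℝ)^n / Real.exp 1 ^ n) := by
            ring
        _ = 2 * (n:ℝ)^n * Real.sqrt n := by
            rw [hexpn, hexpnn]
            field_simp [Real.exp_ne_zero]
        _ ≤ ((n:ℝ)+1)^n * Real.sqrt n := by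
            apply mul_le_mul_of_nonneg_right hbern hsn.le
    -- the logarithmic inequality
    have hlog2a := Real.log_two_gt_d9
    have hlog2b := Real.log_two_lt_d9
    have hlogn : Real.log (n:ℝ) ≤ (n:ℝ)/8 + 3 * Real.log 2 - 1 := by
      have h8 : Real.log ((n:ℝ)/8) ≤ (n:ℝ)/8 - 1 := Real.log_le_sub_one_of_pos (by positivity)
      rw [Real.log_div (by positivity) (by norm_num)] at h8
      have : Real.log 8 = 3 * Real.log 2 := by
        rw [show (8:ℝ) = 2^3 by norm_num, Real.log_pow]
        push_cast; ring
      rw [this] at h8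
      linarith
    have hkey : 0.88 * (((n:ℝ)+1)*(n:ℝ)) / ((n:ℝ)+2) ≤ Real.log 2 + ((n:ℝ)-1) - Real.log (n:ℝ)/2 := by
      have hn2 : (0:ℝ) < (n:ℝ)+2 := by linarith
      rw [div_le_iff₀ hn2]
      have p1 : Real.log (n:ℝ) * ((n:ℝ)+2) ≤ ((n:ℝ)/8 + 3*Real.log 2 - 1) * ((n:ℝ)+2) :=
        mul_le_mul_of_nonneg_right hlogn hn2.le
      have p2 : Real.log 2 * ((n:ℝ)+2) ≤ 0.6931471808 * ((n:ℝ)+2) :=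
        mul_le_mul_of_nonneg_right hlog2b.le hn2.le
      nlinarith [p1, p2, hnR, sq_nonneg ((n:ℝ)-8)]
    have hsqrt_eq : Real.sqrt (n:ℝ) = Real.exp (Real.log (n:ℝ)/2) := by
      rw [Real.sqrt_eq_rpow, Real.rpow_def_of_pos hn0]
      ring_nf
    have h2eq : (2:ℝ) = Real.exp (Real.log 2) := (Real.exp_log (by norm_num)).symm
    have hchain : Real.exp (0.88 * (((n:ℝ)+1)*(n:ℝ)) / ((n:ℝ)+2)) ≤ 2 * Real.exp ((n:ℝ)-1) / Real.sqrt n := by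
      rw [hsqrt_eq]
      calc Real.exp (0.88 * (((n:ℝ)+1)*(n:ℝ)) / ((n:ℝ)+2))
          ≤ Real.exp (Real.log 2 + ((n:ℝ)-1) - Real.log (n:ℝ)/2) := Real.exp_le_exp.mpr hkey
        _ = 2 * Real.exp ((n:ℝ)-1) / Real.exp (Real.log (n:ℝ)/2) := by
            rw [Real.exp_sub, Real.exp_add, Real.exp_log (by norm_num : (0:ℝ) < 2)]
    -- assemble lower bound
    have hpowle : (1 + 0.88/((n:ℝ)+2)) ^ ((n+1)*n) ≤ d ^ ((n+1)*n) := by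
      have step1 : (1 + 0.88/((n:ℝ)+2)) ≤ Real.exp (0.88/((n:ℝ)+2)) := by
        have := Real.add_one_le_exp (0.88/((n:ℝ)+2))
        linarith
      have step2 : (1 + 0.88/((n:ℝ)+2)) ^ ((n+1)*n) ≤ Real.exp (0.88/((n:ℝ)+2)) ^ ((n+1)*n) :=
        pow_le_pow_left₀ (by positivity) step1 _
      have step3 : Real.exp (0.88/((n:ℝ)+2)) ^ ((n+1)*n) = Real.exp (0.88 * (((n:ℝ)+1)*(n:ℝ)) / ((n:ℝ)+2)) := by
        rw [← Real.exp_nat_mul]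
        congr 1
        push_cast
        field_simp
      rw [hdT]
      calc (1 + 0.88/((n:ℝ)+2)) ^ ((n+1)*n) ≤ Real.exp (0.88 * (((n:ℝ)+1)*(n:ℝ)) / ((n:ℝ)+2)) := by
            rw [← step3]; exact step2
        _ ≤ 2 * Real.exp ((n:ℝ)-1) / Real.sqrt n := hchain
        _ ≤ ((n:ℝ)+1)^n / (n.factorial:ℝ) := hTge
    have hge : 1 + 0.88/((n:ℝ)+2) ≤ d :=
      le_of_pow_le_pow_left₀ hNne hdpos.le hpowle
    rw [hkn]
    have hn2 : (0:ℝ) < (n:ℝ)+2 := by linarith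
    rw [← sub_nonneg]
    have : ((n:ℝ)+2) * (d-1) - 0.88 = ((n:ℝ)+2) * ((d - 1) - 0.88/((n:ℝ)+2)) := by
      field_simp
    rw [this]
    apply mul_nonneg hn2.le
    linarith
  · -- upper bound on k(d-1)
    rw [hkn]
    have hn2 : (0:ℝ) < (n:ℝ)+2 := by linarith
    have hu1 : (0:ℝ) < 1/(n:ℝ) := by positivity
    have hnu : (n:ℝ) * (1/(n:ℝ)) = 1 := by field_simp
    have hnuu : (n:ℝ) * (1/(n:ℝ)) * (1/(n:ℝ)) = 1/(n:ℝ) := by rw [hnu]; ring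
    have hq1 := mul_le_mul_of_nonneg_left hd1n hn2.le
    have husq : (1/(n:ℝ)) * (1/(n:ℝ)) ≤ (1/8) * (1/(n:ℝ)) :=
      mul_le_mul_of_nonneg_right h18 hu1.le
    nlinarith [hq1, hnu, hnuu, husq, h18, hu1]
section Final

variable (k : ℕ)

/-- pointwise strict bound -/
lemma Bfun_lt (hk : 3 ≤ k) (v : ℕ) (hv0 : 0 < v) (hvk : v < k) :
    Bfun k v < (k : ℝ) ^ 2 := by
  set d := Dfun (k - 1) with hdd
  obtain ⟨hd2, hx1, hx2⟩ :
      d ≤ 1.42 ∧ 0.88 ≤ (k:ℝ) * (d - 1) ∧ (k:ℝ) * (d - 1) ≤ 1.41 := by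
    rcases le_or_gt k 9 with h | h
    · exact rect_small k hk h
    · exact rect_large k (by omega)
  have hkR : (3:ℝ) ≤ (k:ℝ) := by exact_mod_cast hk
  have hd1 : 1 < d := by nlinarith
  have hdpos : (0:ℝ) < d := by linarith
  set Q : ℕ → ℝ := fun i => Qr (k:ℝ) d (i:ℝ) with hQ
  have hQpos : ∀ i, i ≤ k → 0 < Q i := by
    intro i hi
    have hiR : (i:ℝ) ≤ (k:ℝ) := by exact_mod_cast hi
    have hi0 : (0:ℝ) ≤ (i:ℝ) := by positivity
    have hexpand : Q i = ((k:ℝ) - i)^2 + 2*(i:ℝ)*((k:ℝ)-i)*d + (i:ℝ)*((i:ℝ)-1)*d^2 := by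
      simp only [hQ, Qr]; ring
    rcases Nat.eq_zero_or_pos i with h0 | hpos
    · subst h0
      have : Q 0 = (k:ℝ)^2 := by simp only [hQ, Qr]; push_cast; ring
      rw [this]
      nlinarith
    · have h1R : (1:ℝ) ≤ (i:ℝ) := by exact_mod_cast hpos
      have t2 : (0:ℝ) ≤ 2*(i:ℝ)*((k:ℝ)-i)*d :=
        mul_nonneg (mul_nonneg (by positivity) (by linarith)) (by linarith)
      have t3 : (0:ℝ) ≤ (i:ℝ)*((i:ℝ)-1)*d^2 :=
        mul_nonneg (mul_nonneg (by positivity) (by linarith)) (by positivity)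
      rcases eq_or_lt_of_le hi with heq | hlt
      · have hik : (i:ℝ) = (k:ℝ) := by exact_mod_cast heq
        rw [hexpand, hik]
        nlinarith
      · have hikR : (i:ℝ) + 1 ≤ (k:ℝ) := by exact_mod_cast hlt
        rw [hexpand]
        nlinarith [sq_nonneg ((k:ℝ) - i)]
  -- log-convexity at integer points
  set q : ℕ → ℝ := fun i => Real.log (Q i) with hq
  have hconv : ∀ i, i + 2 ≤ k → q i + q (i + 2) > 2 * q (i + 1) := by
    intro i hi
    have hi0' : (0:ℝ) ≤ (i:ℝ) := by positivity
    have h1 : (1:ℝ) ≤ ((i:ℝ) + 1) := by linarith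
    have h2 : ((i:ℝ) + 1) ≤ (k:ℝ) - 1 := by
      have : (i:ℝ) + 2 ≤ (k:ℝ) := by exact_mod_cast hi
      linarith
    have hlc := Q_logconvex (k:ℝ) d ((i:ℝ)+1) hd1 hd2 hx1 hx2 (by linarith) (by linarith)
    have e1 : ((i:ℝ) + 1) - 1 = ((i:ℕ):ℝ) := by ring
    have e2 : ((i:ℝ) + 1) + 1 = (((i+2:ℕ)):ℝ) := by push_cast; ring
    have e3 : ((i:ℝ) + 1) = (((i+1:ℕ)):ℝ) := by push_cast; ring
    rw [e1, e2, e3] at hlc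
    have p0 := hQpos i (by omega)
    have p1 := hQpos (i+1) (by omega)
    have p2 := hQpos (i+2) (by omega)
    have : Real.log ((Q (i+1))^2) < Real.log (Q i * Q (i+2)) := by
      apply Real.log_lt_log (by positivity)
      exact hlc
    rw [Real.log_pow, Real.log_mul p0.ne' p2.ne'] at this
    simp only [hq]
    push_cast at this ⊢
    linarith
  have hchord := chord_lemma k q hconv v hv0 hvk
  -- exponentiate
  have hQv := hQpos v (le_of_lt hvk)
  have hQ0 := hQpos 0 (by omega)
  have hQk := hQpos k le_rfl
  have hkv : ((k - v : ℕ) : ℝ) = (k:ℝ) - (v:ℝ) := by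
    push_cast [Nat.cast_sub (le_of_lt hvk)]; ring
  have hpowlt : Q v ^ k < Q 0 ^ (k - v) * Q k ^ v := by
    have lhs_eq : Q v ^ k = Real.exp ((k:ℝ) * q v) := by
      simp only [hq]
      rw [← Real.log_pow, Real.exp_log (pow_pos hQv k)]
    have rhs_eq : Q 0 ^ (k - v) * Q k ^ v
        = Real.exp (((k:ℝ) - v) * q 0 + (v:ℝ) * q k) := by
      simp only [hq]
      rw [Real.exp_add, ← hkv, ← Real.log_pow, ← Real.log_pow,
        Real.exp_log (pow_pos hQ0 (k-v)), Real.exp_log (pow_pos hQk v)]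
    rw [lhs_eq, rhs_eq]
    exact Real.exp_lt_exp.mpr hchord
  -- identify B with C^v Q v
  have hCpos : 0 < Cfun k := div_pos (Dfun_pos _) (Dfun_pos _)
  have hBeq : Bfun k v = Cfun k ^ v * Q v := by
    rw [Bfun]
    congr 1
    simp only [hQ, Qr, ← hdd]
    ring
  have hBpos : 0 < Bfun k v := by
    rw [hBeq]; exact mul_pos (pow_pos hCpos v) hQv
  -- key identity values
  have hkm1 : (0:ℝ) < (k:ℝ) - 1 := by linarith
  have hQ0val : Q 0 = (k:ℝ)^2 := by simp only [hQ, Qr]; push_cast; ring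
  have hQkval : Q k = (k:ℝ) * ((k:ℝ) - 1) * d^2 := by simp only [hQ, Qr]; ring
  have hkey := key_identity k hk
  rw [← hdd] at hkey
  have hCkQk : Cfun k ^ k * Q k = (k:ℝ)^2 := by
    rw [hQkval]
    have : Cfun k ^ k * ((k:ℝ) * ((k:ℝ)-1) * d^2) = (Cfun k ^ k * d^2) * ((k:ℝ) * ((k:ℝ)-1)) := by ring
    rw [this, hkey]
    field_simp
  -- B^k < (k²)^k
  have hBk : Bfun k v ^ k < ((k:ℝ)^2) ^ k := by
    have expand : Bfun k v ^ k = (Cfun k ^ k) ^ v * Q v ^ k := by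
      rw [hBeq, mul_pow, ← pow_mul, ← pow_mul, mul_comm v k, pow_mul]
    rw [expand]
    calc (Cfun k ^ k) ^ v * Q v ^ k
        < (Cfun k ^ k) ^ v * (Q 0 ^ (k - v) * Q k ^ v) := by
          apply mul_lt_mul_of_pos_left hpowlt (pow_pos (pow_pos hCpos k) v)
      _ = Q 0 ^ (k - v) * (Cfun k ^ k * Q k) ^ v := by rw [mul_pow]; ring
      _ = ((k:ℝ)^2) ^ (k - v) * ((k:ℝ)^2) ^ v := by rw [hCkQk, hQ0val]
      _ = ((k:ℝ)^2) ^ k := by rw [← pow_add]; congr 1; omega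
  exact lt_of_pow_lt_pow_left₀ k (by positivity) hBk

end Final

/-- For every integer `k ≥ 3` there exists `ε_k > 0` such that `B(k,v) < k² - ε_k`
for every integer `v` with `0 < v < k`. -/
theorem wanless_lemma (k : ℕ) (hk : 3 ≤ k) :
    ∃ ε : ℝ, 0 < ε ∧ ∀ v : ℕ, 0 < v → v < k → Bfun k v < (k : ℝ) ^ 2 - ε := by
  have hne : (Finset.Ioo 0 k).Nonempty := ⟨1, by simp; omega⟩
  obtain ⟨m, hm, hmin⟩ :=
    Finset.exists_min_image (Finset.Ioo 0 k) (fun v => (k:ℝ)^2 - Bfun k v) hne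
  simp only [Finset.mem_Ioo] at hm
  have hBm := Bfun_lt k hk m hm.1 hm.2
  refine ⟨((k:ℝ)^2 - Bfun k m)/2, by linarith, ?_⟩
  intro v hv0 hvk
  have := hmin v (by simp [Finset.mem_Ioo]; omega)
  linarith
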